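/- Suppose t₁ and t₂ are parse trees of a context-free grammar G, A is a variable such that t₁ is not A-recurrence free (some root-to-leaf path of t₁ contains at least two nodes labelled A) and t₂ is not A-occurrence free (A occurs in t₂). Then there exist parse trees t₁′ and t₂′ with root(t₁′) = root(t₁), root(t₂′) = root(t₂), Π(Y(t₁)) + Π(Y(t₂)) = Π(Y(t₁′)) + Π(Y(t₂′)), and t₁′ is A-recurrence free. -/

import Mathlib

/-- Trees whose internal nodes are labelled by nonterminals `N` and whose
leaves are labelled by terminals `T`. -/
inductive PTree (T N : Type*) where
  | leaf (a : T) : PTree T N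
  | node (A : N) (children : List (PTree T N)) : PTree T N

namespace PTree

variable {T N : Type*}

/-- The symbol labelling the root of a tree. -/
def rootSym : PTree T N → Symbol T N
  | leaf a => Symbol.terminal a
  | node A _ => Symbol.nonterminal A

/-- The yield: the terminal word read off the leaves. -/
def yield : PTree T N → List T
  | leaf a => [a]
  | node _ cs => (cs.attach.map (fun c => yield c.1)).flatten
termination_by t => sizeOf t
decreasing_by
  simp_wf
  have := List.sizeOf_lt_of_mem c.2
  omega

/-- A tree is a valid parse tree of the grammar `g` when the children of every
internal node spell the right-hand side of a production of its label. -/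
inductive IsParseTree (g : ContextFreeGrammar T) : PTree T g.NT → Prop where
  | leaf (a : T) : IsParseTree g (leaf a)
  | node (A : g.NT) (cs : List (PTree T g.NT))
      (hrule : (⟨A, cs.map rootSym⟩ : ContextFreeRule T g.NT) ∈ g.rules)
      (hcs : ∀ c ∈ cs, IsParseTree g c) : IsParseTree g (node A cs)

/-- The variable `A` occurs somewhere (labels some internal node) in the tree. -/
inductive Occurs (A : N) : PTree T N → Prop where
  | here (cs : List (PTree T N)) : Occurs A (node A cs)
  | child {B : N} {cs : List (PTree T N)} {c : PTree T N} (hc : c ∈ cs)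
      (h : Occurs A c) : Occurs A (node B cs)

/-- Some root-to-leaf path contains two nodes labelled `A`: equivalently, some node
labelled `A` has a node labelled `A` strictly below it. -/
inductive HasRecurrence (A : N) : PTree T N → Prop where
  | here {cs : List (PTree T N)} {c : PTree T N} (hc : c ∈ cs) (h : Occurs A c) :
      HasRecurrence A (node A cs)
  | child {B : N} {cs : List (PTree T N)} {c : PTree T N} (hc : c ∈ cs)
      (h : HasRecurrence A c) : HasRecurrence A (node B cs)

end PTree

open PTree

set_option linter.unusedSectionVars false

section Helpers

namespace PTree
variable {T N : Type*} [DecidableEq T]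

lemma yield_node (B : N) (cs : List (PTree T N)) :
    yield (node B cs) = (cs.map yield).flatten := by
  rw [yield]
  congr 1
  exact List.attach_map_val

lemma count_yield_node (σ : T) (B : N) (cs : List (PTree T N)) :
    (yield (node B cs)).count σ = (cs.map (fun c => (yield c).count σ)).sum := by
  rw [yield_node, List.count_flatten, List.map_map]
  rfl

lemma sizeOf_lt_node (B : N) {c : PTree T N} {cs : List (PTree T N)} (hc : c ∈ cs) :
    sizeOf c < sizeOf (node B cs) := by
  have := List.sizeOf_lt_of_mem hc
  simp only [node.sizeOf_spec]
  omega

lemma sizeOf_append_cons_lt {c c' : PTree T N} (h : sizeOf c' < sizeOf c)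
    (l₁ l₂ : List (PTree T N)) :
    sizeOf (l₁ ++ c' :: l₂) < sizeOf (l₁ ++ c :: l₂) := by
  induction l₁ with
  | nil => simp only [List.nil_append, List.cons.sizeOf_spec]; omega
  | cons a l ih => simp only [List.cons_append, List.cons.sizeOf_spec]; omega

end PTree
end Helpers

section Main
open PTree
variable {T : Type*} [DecidableEq T] {g : ContextFreeGrammar T}

lemma PTree.isParseTree_replace {B : g.NT} {l₁ l₂ : List (PTree T g.NT)}
    {c c' : PTree T g.NT} (h : IsParseTree g (node B (l₁ ++ c :: l₂)))
    (hroot : rootSym c' = rootSym c) (hc' : IsParseTree g c') :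
    IsParseTree g (node B (l₁ ++ c' :: l₂)) := by
  cases h with
  | node _ _ hrule hcs =>
    constructor
    · simpa [hroot] using hrule
    · intro x hx
      rcases List.mem_append.1 hx with h | h
      · exact hcs x (by simp [h])
      · rcases List.mem_cons.1 h with rfl | h
        · exact hc'
        · exact hcs x (by simp [h])

lemma PTree.occ_extract {A : g.NT} {t₂ : PTree T g.NT} (hocc : Occurs A t₂) :
    IsParseTree g t₂ →
    ∃ u : PTree T g.NT, IsParseTree g u ∧ rootSym u = Symbol.nonterminal A ∧
      sizeOf u ≤ sizeOf t₂ ∧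
      ∀ s : PTree T g.NT, IsParseTree g s → rootSym s = Symbol.nonterminal A →
        ∃ t₂' : PTree T g.NT, IsParseTree g t₂' ∧ rootSym t₂' = rootSym t₂ ∧ Occurs A t₂' ∧
          ∀ σ : T, (yield t₂').count σ + (yield u).count σ
            = (yield t₂).count σ + (yield s).count σ := by
  induction hocc with
  | here cs =>
    intro h₂
    refine ⟨node A cs, h₂, rfl, le_refl _, fun s hs hsroot => ⟨s, hs, hsroot, ?_, fun σ => by omega⟩⟩
    cases s with
    | leaf a => simp [rootSym] at hsroot
    | node B cs' =>
      cases (by simpa [rootSym] using hsroot : B = A)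
      exact Occurs.here _
  | @child B cs c hc hoccc ih =>
    intro h₂
    obtain ⟨l₁, l₂, rfl⟩ := List.append_of_mem hc
    have hc₁ : IsParseTree g c := by
      cases h₂ with
      | node _ _ hrule hcs => exact hcs c (by simp)
    obtain ⟨u, hu, huroot, husize, ctx⟩ := ih hc₁
    refine ⟨u, hu, huroot, ?_, fun s hs hsroot => ?_⟩
    · exact le_of_lt (lt_of_le_of_lt husize (sizeOf_lt_node B (by simp)))
    · obtain ⟨c', hpc', hcroot', hocc', hcnt⟩ := ctx s hs hsroot
      refine ⟨node B (l₁ ++ c' :: l₂), isParseTree_replace h₂ hcroot' hpc',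
        rfl, Occurs.child (by simp) hocc', fun σ => ?_⟩
      have := hcnt σ
      simp only [count_yield_node, List.map_append, List.sum_append, List.map_cons,
        List.sum_cons]
      omega

lemma PTree.rec_extract {A : g.NT} {t₁ : PTree T g.NT} (hrec : HasRecurrence A t₁) :
    IsParseTree g t₁ →
    ∀ s : PTree T g.NT, IsParseTree g s → rootSym s = Symbol.nonterminal A →
    ∃ t₁' w : PTree T g.NT, IsParseTree g t₁' ∧ rootSym t₁' = rootSym t₁ ∧
      sizeOf t₁' < sizeOf t₁ ∧ IsParseTree g w ∧ rootSym w = Symbol.nonterminal A ∧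
      ∀ σ : T, (yield t₁').count σ + (yield w).count σ
        = (yield t₁).count σ + (yield s).count σ := by
  induction hrec with
  | @here cs c hc hoccc =>
    intro h₁ s hs hsroot
    obtain ⟨l₁, l₂, rfl⟩ := List.append_of_mem hc
    have hc₁ : IsParseTree g c := by
      cases h₁ with
      | node _ _ hrule hcs => exact hcs c (by simp)
    obtain ⟨v, hv, hvroot, hvsize, ctx⟩ := occ_extract hoccc hc₁
    obtain ⟨c', hpc', hcroot', _, hcnt⟩ := ctx s hs hsroot
    refine ⟨v, node A (l₁ ++ c' :: l₂), hv, hvroot,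
      lt_of_le_of_lt hvsize (sizeOf_lt_node A (by simp)),
      isParseTree_replace h₁ hcroot' hpc', rfl, fun σ => ?_⟩
    have := hcnt σ
    simp only [count_yield_node, List.map_append, List.sum_append, List.map_cons,
      List.sum_cons]
    omega
  | @child B cs c hc hrecc ih =>
    intro h₁ s hs hsroot
    obtain ⟨l₁, l₂, rfl⟩ := List.append_of_mem hc
    have hc₁ : IsParseTree g c := by
      cases h₁ with
      | node _ _ hrule hcs => exact hcs c (by simp)
    obtain ⟨c₁', w, hpc₁', hcroot₁', hlt, hpw, hwroot, hcnt⟩ := ih hc₁ s hs hsroot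
    refine ⟨node B (l₁ ++ c₁' :: l₂), w, isParseTree_replace h₁ hcroot₁' hpc₁',
      rfl, ?_, hpw, hwroot, fun σ => ?_⟩
    · simp only [node.sizeOf_spec]
      have := sizeOf_append_cons_lt hlt l₁ l₂
      omega
    · have := hcnt σ
      simp only [count_yield_node, List.map_append, List.sum_append, List.map_cons,
        List.sum_cons]
      omega

lemma PTree.aux_reduce {A : g.NT} : ∀ (n : ℕ) (t₁ t₂ : PTree T g.NT), sizeOf t₁ ≤ n →
    IsParseTree g t₁ → IsParseTree g t₂ → HasRecurrence A t₁ → Occurs A t₂ →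
    ∃ t₁' t₂' : PTree T g.NT, IsParseTree g t₁' ∧ IsParseTree g t₂' ∧
      rootSym t₁' = rootSym t₁ ∧ rootSym t₂' = rootSym t₂ ∧
      (∀ σ : T, (yield t₁).count σ + (yield t₂).count σ
        = (yield t₁').count σ + (yield t₂').count σ) ∧
      ¬ HasRecurrence A t₁' := by
  intro n
  induction n with
  | zero =>
    intro t₁ t₂ hsize
    exfalso
    cases t₁ <;> simp only [leaf.sizeOf_spec, node.sizeOf_spec] at hsize <;> omega
  | succ n ih =>
    intro t₁ t₂ hsize h₁ h₂ hrec hocc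
    obtain ⟨u, hu, huroot, _, ctx₂⟩ := occ_extract hocc h₂
    obtain ⟨t₁', w, hp₁', hroot₁', hlt, hpw, hwroot, hcnt₁⟩ := rec_extract hrec h₁ u hu huroot
    obtain ⟨t₂', hp₂', hroot₂', hocc₂', hcnt₂⟩ := ctx₂ w hpw hwroot
    by_cases hr : HasRecurrence A t₁'
    · obtain ⟨t₁'', t₂'', q₁, q₂, qr₁, qr₂, qc, qrec⟩ :=
        ih t₁' t₂' (by omega) hp₁' hp₂' hr hocc₂'
      exact ⟨t₁'', t₂'', q₁, q₂, qr₁.trans hroot₁', qr₂.trans hroot₂',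
        fun σ => by have := hcnt₁ σ; have := hcnt₂ σ; have := qc σ; omega, qrec⟩
    · exact ⟨t₁', t₂', hp₁', hp₂', hroot₁', hroot₂',
        fun σ => by have := hcnt₁ σ; have := hcnt₂ σ; omega, hr⟩

end Main


/-- Lemma 1 of the paper: if `t₁` is not `A`-recurrence free and `t₂` is not
`A`-occurrence free, then there are parse trees `t₁′, t₂′` with the same roots,
the same total Parikh image of yields, such that `t₁′` is `A`-recurrence free. -/
theorem parse_tree_reduce_recurrence {T : Type*} [DecidableEq T]
    (g : ContextFreeGrammar T) (A : g.NT) (t₁ t₂ : PTree T g.NT)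
    (h₁ : IsParseTree g t₁) (h₂ : IsParseTree g t₂)
    (hrec : HasRecurrence A t₁) (hocc : Occurs A t₂) :
    ∃ t₁' t₂' : PTree T g.NT, IsParseTree g t₁' ∧ IsParseTree g t₂' ∧
      rootSym t₁' = rootSym t₁ ∧ rootSym t₂' = rootSym t₂ ∧
      (∀ σ : T, (yield t₁).count σ + (yield t₂).count σ
        = (yield t₁').count σ + (yield t₂').count σ) ∧
      ¬ HasRecurrence A t₁' :=
  PTree.aux_reduce (sizeOf t₁) t₁ t₂ (le_refl _) h₁ h₂ hrec hocc
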